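/- Let S be a finite linearly ordered set and suppose A ≥ B in the Gale order on the power set of S, where |A| = |B|, and let σ = σ_{A,B} be the shuffle. If C ⊆ S satisfies C ≥ A in the Gale order on the power set of S, then C ≥ A in the Gale order on the power set of S_σ (the set S with linear order transported by σ). -/

import Mathlib

lemma my_emb_congr {β : Type*} [LinearOrder β] {s : Finset β} {k k' : ℕ}
    (h : s.card = k) (h' : s.card = k') {i : ℕ} (hi : i < k) (hi' : i < k') :
    s.orderEmbOfFin h ⟨i, hi⟩ = s.orderEmbOfFin h' ⟨i, hi'⟩ := by
  subst h; subst h'; rfl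

lemma my_card_lt {β : Type*} [LinearOrder β] (s : Finset β) {k : ℕ} (h : s.card = k)
    (i : Fin k) (t : Finset β) (ht : ∀ y, y ∈ t ↔ y ∈ s ∧ y < s.orderEmbOfFin h i) :
    t.card = i := by
  classical
  have himg : t = (Finset.Iio i).image (s.orderEmbOfFin h) := by
    ext y
    rw [ht y]
    simp only [Finset.mem_image, Finset.mem_Iio]
    constructor
    · rintro ⟨hy, hlt⟩
      have hr : y ∈ Set.range (s.orderEmbOfFin h) := by
        rw [Finset.range_orderEmbOfFin]; exact hy
      obtain ⟨j, rfl⟩ := hr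
      exact ⟨j, (s.orderEmbOfFin h).strictMono.lt_iff_lt.1 hlt, rfl⟩
    · rintro ⟨j, hj, rfl⟩
      exact ⟨s.orderEmbOfFin_mem h j, (s.orderEmbOfFin h).strictMono hj⟩
  rw [himg, Finset.card_image_of_injective _ (s.orderEmbOfFin h).injective, Fin.card_Iio]

lemma my_card_le {β : Type*} [LinearOrder β] (s : Finset β) {k : ℕ} (h : s.card = k)
    (i : Fin k) (t : Finset β) (ht : ∀ y, y ∈ t ↔ y ∈ s ∧ y ≤ s.orderEmbOfFin h i) :
    t.card = i + 1 := by
  classical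
  have h1 : t = insert (s.orderEmbOfFin h i)
      (s.filter (fun y => y < s.orderEmbOfFin h i)) := by
    ext y
    rw [ht y]
    simp only [Finset.mem_insert, Finset.mem_filter]
    constructor
    · rintro ⟨hy, hle⟩
      rcases hle.lt_or_eq with h' | h'
      · exact Or.inr ⟨hy, h'⟩
      · exact Or.inl h'
    · rintro (rfl | ⟨hy, hlt⟩)
      · exact ⟨s.orderEmbOfFin_mem h i, le_rfl⟩
      · exact ⟨hy, hlt.le⟩
  have h2 : (s.filter (fun y => y < s.orderEmbOfFin h i)).card = i :=
    my_card_lt s h i _ (fun y => by simp [Finset.mem_filter])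
  rw [h1, Finset.card_insert_of_notMem (by simp), h2]

def galeL {α : Type*} (L : LinearOrder α) (A B : Finset α) : Prop :=
  B.card ≤ A.card ∧ ∀ (i : ℕ) (hA : i < A.card) (hB : i < B.card),
    L.le ((@Finset.orderEmbOfFin α L A A.card rfl) ⟨i, hA⟩)
         ((@Finset.orderEmbOfFin α L B B.card rfl) ⟨i, hB⟩)

/-- Let `S` be a finite linearly ordered set, `A ≥ B` in the Gale order
with `|A| = |B|`, and let `σ = σ_{A,B}` be the shuffle: the unique permutation of `S`
mapping `B` onto `A` (hence the complement of `B` onto the complement of `A`) whose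
restrictions to `B` and to its complement are order-preserving.  If `C ⊆ S` satisfies
`C ≥ A` in the Gale order, then `C ≥ A` in the Gale order of `S_σ`, the set `S` with
the order transported by `σ` (i.e. `x ≤ y` in `S_σ` iff `σ⁻¹ x ≤ σ⁻¹ y`). -/
theorem gale_shuffle_transport {α : Type*} [Fintype α] [LinearOrder α]
    (A B C : Finset α) (hcard : A.card = B.card)
    (hBA : galeL inferInstance B A)
    (σ : Equiv.Perm α)
    (hmap : Set.image σ ↑B = (↑A : Set α))
    (hmono : ∀ x ∈ B, ∀ y ∈ B, x ≤ y → σ x ≤ σ y)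
    (hmap' : Set.image σ (↑B : Set α)ᶜ = (↑A : Set α)ᶜ)
    (hmono' : ∀ x ∉ B, ∀ y ∉ B, x ≤ y → σ x ≤ σ y)
    (hAC : galeL inferInstance A C) :
    galeL (LinearOrder.lift' (fun x => σ.symm x) σ.symm.injective) A C := by
  classical
  obtain ⟨hABcard, hBAle⟩ := hBA
  obtain ⟨hCAcard, hACle⟩ := hAC
  -- membership transport
  have hσB : ∀ x ∈ B, σ x ∈ A := by
    intro x hx
    have h : σ x ∈ Set.image σ ↑B := ⟨x, hx, rfl⟩
    rw [hmap] at h; exact_mod_cast h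
  have hσB' : ∀ x, x ∉ B → σ x ∉ A := by
    intro x hx
    have h : σ x ∈ Set.image σ (↑B : Set α)ᶜ := ⟨x, hx, rfl⟩
    rw [hmap'] at h
    simpa using h
  have hσA' : ∀ y, y ∉ A → σ.symm y ∉ B := by
    intro y hy
    have hy' : y ∈ (↑A : Set α)ᶜ := hy
    rw [← hmap'] at hy'
    obtain ⟨x, hx, rfl⟩ := hy'
    rwa [Equiv.symm_apply_apply]
  -- σ maps the j-th element of B to the j-th element of A
  have key1 : ∀ j : Fin A.card,
      σ (B.orderEmbOfFin hcard.symm j) = A.orderEmbOfFin rfl j := by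
    have hf : ∀ j : Fin A.card, σ (B.orderEmbOfFin hcard.symm j) ∈ A :=
      fun j => hσB _ (B.orderEmbOfFin_mem _ j)
    have hm : StrictMono (fun j : Fin A.card => σ (B.orderEmbOfFin hcard.symm j)) := by
      intro j k hjk
      have h1 : B.orderEmbOfFin hcard.symm j < B.orderEmbOfFin hcard.symm k :=
        (B.orderEmbOfFin hcard.symm).strictMono hjk
      have h2 := hmono _ (B.orderEmbOfFin_mem _ j) _ (B.orderEmbOfFin_mem _ k) h1.le
      rcases h2.lt_or_eq with h | h
      · exact h
      · exact absurd (σ.injective h) h1.ne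
    have h := Finset.orderEmbOfFin_unique (s := A) rfl hf hm
    intro j; exact congrFun h j
  have key2 : ∀ j : Fin A.card,
      σ.symm (A.orderEmbOfFin rfl j) = B.orderEmbOfFin hcard.symm j := by
    intro j; rw [← key1 j, Equiv.symm_apply_apply]
  -- the L'-sorted enumeration of A coincides with the L-sorted one
  have keyA : ∀ j : Fin A.card,
      (@Finset.orderEmbOfFin α (LinearOrder.lift' (fun x => σ.symm x) σ.symm.injective)
        A A.card rfl) j = A.orderEmbOfFin rfl j := by
    have hf : ∀ j : Fin A.card, (A.orderEmbOfFin rfl) j ∈ A :=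
      fun j => A.orderEmbOfFin_mem _ j
    have hm : @StrictMono (Fin A.card) α _
        (LinearOrder.lift' (fun x => σ.symm x) σ.symm.injective).toPreorder
        (fun j => A.orderEmbOfFin rfl j) := by
      intro j k hjk
      show σ.symm (A.orderEmbOfFin rfl j) < σ.symm (A.orderEmbOfFin rfl k)
      rw [key2, key2]
      exact (B.orderEmbOfFin hcard.symm).strictMono hjk
    have h := @Finset.orderEmbOfFin_unique α
      (LinearOrder.lift' (fun x => σ.symm x) σ.symm.injective) A A.card rfl _ hf hm
    intro j; exact (congrFun h j).symm
  -- counting split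
  have split : ∀ (s : Finset α) (z : α),
      (Finset.univ.filter (fun x => x < z)).card =
        (s.filter (fun x => x < z)).card +
        (Finset.univ.filter (fun x => x ∉ s ∧ x < z)).card := by
    intro s z
    have hu : Finset.univ.filter (fun x => x < z) =
        s.filter (fun x => x < z) ∪ Finset.univ.filter (fun x => x ∉ s ∧ x < z) := by
      ext x
      simp only [Finset.mem_filter, Finset.mem_union, Finset.mem_univ, true_and]
      tauto
    rw [hu, Finset.card_union_of_disjoint]
    rw [Finset.disjoint_left]
    intro x hx hx'
    simp only [Finset.mem_filter, Finset.mem_univ, true_and] at hx hx'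
    exact hx'.1 hx.1
  have hri : ∀ i : Fin A.card,
      (Finset.univ.filter (fun x => x ∉ B ∧ x < B.orderEmbOfFin hcard.symm i)).card ≤
      (Finset.univ.filter (fun x => x ∉ A ∧ x < A.orderEmbOfFin rfl i)).card := by
    intro i
    have h1 := split B (B.orderEmbOfFin hcard.symm i)
    have h2 := split A (A.orderEmbOfFin rfl i)
    have e1 : (B.filter (fun x => x < B.orderEmbOfFin hcard.symm i)).card = i :=
      my_card_lt B hcard.symm i _ (fun y => by simp [Finset.mem_filter])
    have e2 : (A.filter (fun x => x < A.orderEmbOfFin rfl i)).card = i :=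
      my_card_lt A rfl i _ (fun y => by simp [Finset.mem_filter])
    have hiB : (i : ℕ) < B.card := lt_of_lt_of_le i.isLt hcard.le
    have hba : B.orderEmbOfFin hcard.symm i ≤ A.orderEmbOfFin rfl i := by
      have h := hBAle i.val hiB i.isLt
      rw [my_emb_congr rfl hcard.symm hiB i.isLt] at h
      exact h
    have hle : (Finset.univ.filter (fun x => x < B.orderEmbOfFin hcard.symm i)).card ≤
        (Finset.univ.filter (fun x => x < A.orderEmbOfFin rfl i)).card := by
      apply Finset.card_le_card
      intro x hx
      simp only [Finset.mem_filter, Finset.mem_univ, true_and] at hx ⊢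
      exact lt_of_lt_of_le hx hba
    omega
  -- cardinality equality through σ on the complements
  have eqcard : ∀ t, t ∉ B →
      (Finset.univ.filter (fun x => x ∉ B ∧ x ≤ t)).card =
      (Finset.univ.filter (fun y => y ∉ A ∧ y ≤ σ t)).card := by
    intro t ht
    apply le_antisymm
    · apply Finset.card_le_card_of_injOn σ
      · intro x hx
        simp only [Finset.mem_coe, Finset.mem_filter, Finset.mem_univ, true_and] at hx ⊢
        exact ⟨hσB' x hx.1, hmono' x hx.1 t ht hx.2⟩
      · intro x _ y _ h; exact σ.injective h
    · apply Finset.card_le_card_of_injOn (fun y => σ.symm y)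
      · intro y hy
        simp only [Finset.mem_coe, Finset.mem_filter, Finset.mem_univ, true_and] at hy ⊢
        obtain ⟨hy1, hy2⟩ := hy
        have hsy : σ.symm y ∉ B := hσA' y hy1
        refine ⟨hsy, ?_⟩
        by_contra hlt
        push_neg at hlt
        have h5 := hmono' t ht (σ.symm y) hsy hlt.le
        rw [Equiv.apply_symm_apply] at h5
        have h6 : y = σ t := le_antisymm hy2 h5
        rw [h6, Equiv.symm_apply_apply] at hlt
        exact lt_irrefl _ hlt
      · intro x _ y _ h; exact σ.symm.injective h
  -- key: anything below b_i is mapped below a_i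
  have key : ∀ (i : Fin A.card) (t : α), t < B.orderEmbOfFin hcard.symm i →
      σ t < A.orderEmbOfFin rfl i := by
    intro i t hlt
    by_cases htB : t ∈ B
    · have hr : t ∈ Set.range (B.orderEmbOfFin hcard.symm) := by
        rw [Finset.range_orderEmbOfFin]; exact htB
      obtain ⟨j, rfl⟩ := hr
      have hji : j < i := (B.orderEmbOfFin hcard.symm).strictMono.lt_iff_lt.1 hlt
      rw [key1 j]
      exact (A.orderEmbOfFin rfl).strictMono hji
    · by_contra hge
      push_neg at hge
      have hσt : σ t ∉ A := hσB' t htB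
      have h1 : (Finset.univ.filter (fun y => y ∉ A ∧ y < A.orderEmbOfFin rfl i)).card + 1 ≤
          (Finset.univ.filter (fun y => y ∉ A ∧ y ≤ σ t)).card := by
        have hnot : σ t ∉ Finset.univ.filter
            (fun y => y ∉ A ∧ y < A.orderEmbOfFin rfl i) := by
          simp only [Finset.mem_filter, Finset.mem_univ, true_and, not_and]
          intro _
          exact not_lt.2 hge
        have hsub : insert (σ t)
            (Finset.univ.filter (fun y => y ∉ A ∧ y < A.orderEmbOfFin rfl i)) ⊆
            Finset.univ.filter (fun y => y ∉ A ∧ y ≤ σ t) := by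
          intro y hy
          simp only [Finset.mem_insert, Finset.mem_filter, Finset.mem_univ, true_and] at hy ⊢
          rcases hy with rfl | ⟨hy1, hy2⟩
          · exact ⟨hσt, le_rfl⟩
          · exact ⟨hy1, le_trans hy2.le hge⟩
        calc (Finset.univ.filter (fun y => y ∉ A ∧ y < A.orderEmbOfFin rfl i)).card + 1
            = (insert (σ t) (Finset.univ.filter
                (fun y => y ∉ A ∧ y < A.orderEmbOfFin rfl i))).card :=
              (Finset.card_insert_of_notMem hnot).symm
          _ ≤ _ := Finset.card_le_card hsub
      have h2 : (Finset.univ.filter (fun x => x ∉ B ∧ x ≤ t)).card ≤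
          (Finset.univ.filter (fun x => x ∉ B ∧ x < B.orderEmbOfFin hcard.symm i)).card := by
        apply Finset.card_le_card
        intro x hx
        simp only [Finset.mem_filter, Finset.mem_univ, true_and] at hx ⊢
        exact ⟨hx.1, lt_of_le_of_lt hx.2 hlt⟩
      have h3 := eqcard t htB
      have h4 := hri i
      omega
  -- assemble
  refine ⟨hCAcard, ?_⟩
  intro i hiA hiC
  rw [keyA ⟨i, hiA⟩]
  show σ.symm (A.orderEmbOfFin rfl ⟨i, hiA⟩) ≤
    σ.symm ((@Finset.orderEmbOfFin α
      (LinearOrder.lift' (fun x => σ.symm x) σ.symm.injective) C C.card rfl) ⟨i, hiC⟩)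
  rw [key2 ⟨i, hiA⟩]
  by_contra hcon
  push_neg at hcon
  have hsubset : (Finset.univ.filter (fun c => c ∈ C ∧
      (LinearOrder.lift' (fun x => σ.symm x) σ.symm.injective).le c
        ((@Finset.orderEmbOfFin α
          (LinearOrder.lift' (fun x => σ.symm x) σ.symm.injective) C C.card rfl)
          ⟨i, hiC⟩))) ⊆
      C.filter (fun c => c < C.orderEmbOfFin rfl ⟨i, hiC⟩) := by
    intro c hc
    simp only [Finset.mem_filter, Finset.mem_univ, true_and] at hc ⊢
    obtain ⟨hcC, hcx⟩ := hc
    have hcx' : σ.symm c ≤ σ.symm ((@Finset.orderEmbOfFin α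
        (LinearOrder.lift' (fun x => σ.symm x) σ.symm.injective) C C.card rfl)
        ⟨i, hiC⟩) := hcx
    have h1 : σ.symm c < B.orderEmbOfFin hcard.symm ⟨i, hiA⟩ := lt_of_le_of_lt hcx' hcon
    have h2 := key ⟨i, hiA⟩ (σ.symm c) h1
    rw [Equiv.apply_symm_apply] at h2
    have h3 : A.orderEmbOfFin rfl ⟨i, hiA⟩ ≤ C.orderEmbOfFin rfl ⟨i, hiC⟩ :=
      hACle i hiA hiC
    exact ⟨hcC, lt_of_lt_of_le h2 h3⟩
  have hc1 : (Finset.univ.filter (fun c => c ∈ C ∧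
      (LinearOrder.lift' (fun x => σ.symm x) σ.symm.injective).le c
        ((@Finset.orderEmbOfFin α
          (LinearOrder.lift' (fun x => σ.symm x) σ.symm.injective) C C.card rfl)
          ⟨i, hiC⟩))).card = i + 1 := by
    apply @my_card_le α (LinearOrder.lift' (fun x => σ.symm x) σ.symm.injective)
      C C.card rfl ⟨i, hiC⟩
    intro y
    simp only [Finset.mem_filter, Finset.mem_univ, true_and]
  have hc2 : (C.filter (fun c => c < C.orderEmbOfFin rfl ⟨i, hiC⟩)).card = i :=
    my_card_lt C rfl ⟨i, hiC⟩ _ (fun y => by simp [Finset.mem_filter])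
  have hfin := Finset.card_le_card hsubset
  omega
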